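/- Let G be a reduced Gröbner basis of I with respect to <, and suppose ω lies in the relative interior of the Gröbner cone of < (i.e., in_ω(g) = in_<(g) for all g ∈ G). Then in_ω(I) = in_<(I) is a monomial ideal and G is also a Gröbner basis of I with respect to the refinement <'_ω for any term ordering <'. -/

import Mathlib

open MvPolynomial

/-- A term ordering on the monomials (exponent vectors) of `k[x_1, …, x_n]`:
a strict total well-ordering compatible with addition of exponents. -/
structure TermOrder (n : ℕ) where
  lt : (Fin n →₀ ℕ) → (Fin n →₀ ℕ) → Prop
  irrefl : ∀ a, ¬ lt a a
  trans : ∀ a b c, lt a b → lt b c → lt a c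
  trichotomous : ∀ a b, lt a b ∨ a = b ∨ lt b a
  wf : WellFounded lt
  add_right : ∀ a b c, lt a b → lt (a + c) (b + c)

variable {n : ℕ}

/-- `α` is the exponent vector of the `t`-leading term of `f`. -/
def TermOrder.IsLeadExp {k : Type*} [CommSemiring k] (t : TermOrder n)
    (f : MvPolynomial (Fin n) k) (α : Fin n →₀ ℕ) : Prop :=
  α ∈ f.support ∧ ∀ β ∈ f.support, β ≠ α → t.lt β α

open Classical in
/-- The exponent vector of the `t`-leading term of `f` (junk value `0` if none exists). -/
noncomputable def TermOrder.leadExp {k : Type*} [CommSemiring k] (t : TermOrder n)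
    (f : MvPolynomial (Fin n) k) : Fin n →₀ ℕ :=
  if h : ∃ α, t.IsLeadExp f α then h.choose else 0

/-- The leading term `in_t(f)` of `f` with respect to the term ordering `t`. -/
noncomputable def TermOrder.leadTerm {k : Type*} [CommSemiring k] (t : TermOrder n)
    (f : MvPolynomial (Fin n) k) : MvPolynomial (Fin n) k :=
  monomial (t.leadExp f) (coeff (t.leadExp f) f)

/-- The initial ideal `in_t(I)` of `I` with respect to the term ordering `t`. -/
noncomputable def initialIdealT {k : Type*} [CommSemiring k] (t : TermOrder n)
    (I : Ideal (MvPolynomial (Fin n) k)) : Ideal (MvPolynomial (Fin n) k) :=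
  Ideal.span { p | ∃ f ∈ I, f ≠ 0 ∧ p = t.leadTerm f }

/-- The `ω`-weight `⟨ω, α⟩` of an exponent vector `α`. -/
noncomputable def wt (ω : Fin n → ℝ) (α : Fin n →₀ ℕ) : ℝ :=
  ∑ i, ω i * (α i : ℝ)

/-- The initial form `in_ω(f)`: the sum of the terms of `f` of maximal `ω`-weight. -/
noncomputable def initialForm {k : Type*} [CommSemiring k] (ω : Fin n → ℝ)
    (f : MvPolynomial (Fin n) k) : MvPolynomial (Fin n) k :=
  ∑ α ∈ f.support.filter (fun α => ∀ β ∈ f.support, wt ω β ≤ wt ω α),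
    monomial α (coeff α f)

/-- The generalized initial ideal `in_ω(I)` of `I` with respect to the weight vector `ω`. -/
noncomputable def initialIdealW {k : Type*} [CommSemiring k] (ω : Fin n → ℝ)
    (I : Ideal (MvPolynomial (Fin n) k)) : Ideal (MvPolynomial (Fin n) k) :=
  Ideal.span { p | ∃ f ∈ I, f ≠ 0 ∧ p = initialForm ω f }

/-- The refinement `<_ω` of the weight vector `ω` by the term ordering `t`:
compare first by `ω`-weight, break ties with `t`. -/
def refineLt (ω : Fin n → ℝ) (t : TermOrder n) (α β : Fin n →₀ ℕ) : Prop :=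
  wt ω α < wt ω β ∨ (wt ω α = wt ω β ∧ t.lt α β)

/-- `G` is a Gröbner basis of `I` w.r.t. `t`: `G ⊆ I` and the leading terms of the
elements of `G` generate the initial ideal `in_t(I)`. -/
def IsGroebnerBasis {k : Type*} [CommSemiring k] (t : TermOrder n)
    (I : Ideal (MvPolynomial (Fin n) k)) (G : Finset (MvPolynomial (Fin n) k)) : Prop :=
  (∀ g ∈ G, g ∈ I) ∧
    Ideal.span ((fun g => t.leadTerm g) '' (G : Set (MvPolynomial (Fin n) k)))
      = initialIdealT t I

open Classical in
/-- `G` is the reduced (marked) Gröbner basis of `I` w.r.t. `t`: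
a Gröbner basis that is minimal, monic and reduced. -/
def IsReducedGB {k : Type*} [CommSemiring k] (t : TermOrder n)
    (I : Ideal (MvPolynomial (Fin n) k)) (G : Finset (MvPolynomial (Fin n) k)) : Prop :=
  IsGroebnerBasis t I G ∧
  (∀ g ∈ G, coeff (t.leadExp g) g = 1) ∧
  (∀ g ∈ G, ∀ g' ∈ G, g ≠ g' → ∀ α ∈ g.support, ¬ t.leadExp g' ≤ α) ∧
  (∀ g ∈ G, ¬ IsGroebnerBasis t I (G.erase g))

namespace TermOrder

variable (t : TermOrder n)

theorem lt_asymm' {a b : Fin n →₀ ℕ} (h : t.lt a b) : ¬ t.lt b a :=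
  fun h' => t.irrefl a (t.trans _ _ _ h h')

theorem not_lt_zero' (a : Fin n →₀ ℕ) : ¬ t.lt a 0 := by
  intro h
  have h2 : t.lt (a + t.wf.min Set.univ ⟨0, trivial⟩) (0 + t.wf.min Set.univ ⟨0, trivial⟩) :=
    t.add_right _ _ _ h
  rw [zero_add] at h2
  exact t.wf.not_lt_min Set.univ trivial h2

theorem zero_lt' {a : Fin n →₀ ℕ} (h : a ≠ 0) : t.lt 0 a := by
  rcases t.trichotomous 0 a with h1 | h1 | h1
  · exact h1
  · exact absurd h1.symm h
  · exact absurd h1 (t.not_lt_zero' a)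

theorem le_add' (a b : Fin n →₀ ℕ) : a = a + b ∨ t.lt a (a + b) := by
  by_cases hb : b = 0
  · left; simp [hb]
  · right
    have := t.add_right _ _ a (t.zero_lt' hb)
    rwa [zero_add, add_comm] at this

theorem exists_max (s : Finset (Fin n →₀ ℕ)) (hs : s.Nonempty) :
    ∃ a ∈ s, ∀ b ∈ s, b ≠ a → t.lt b a := by
  classical
  induction s using Finset.induction_on with
  | empty => exact absurd hs (by simp)
  | @insert a s ha IH =>
    by_cases hsne : s.Nonempty
    · obtain ⟨m, hm, hmax⟩ := IH hsne
      rcases t.trichotomous a m with h1 | h1 | h1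
      · refine ⟨m, Finset.mem_insert_of_mem hm, ?_⟩
        intro b hb hbm
        rcases Finset.mem_insert.mp hb with rfl | hb'
        · exact h1
        · exact hmax b hb' hbm
      · subst h1
        refine ⟨a, Finset.mem_insert_self _ _, ?_⟩
        intro b hb hba
        rcases Finset.mem_insert.mp hb with rfl | hb'
        · exact absurd rfl hba
        · exact hmax b hb' hba
      · refine ⟨a, Finset.mem_insert_self _ _, ?_⟩
        intro b hb hba
        rcases Finset.mem_insert.mp hb with rfl | hb'
        · exact absurd rfl hba
        · by_cases hbm : b = m
          · exact hbm ▸ h1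
          · exact t.trans _ _ _ (hmax b hb' hbm) h1
    · rw [Finset.not_nonempty_iff_eq_empty] at hsne
      subst hsne
      refine ⟨a, Finset.mem_insert_self _ _, ?_⟩
      intro b hb hba
      rcases Finset.mem_insert.mp hb with rfl | hb'
      · exact absurd rfl hba
      · simp at hb'

variable {k : Type*} [CommSemiring k]

theorem isLeadExp_leadExp {f : MvPolynomial (Fin n) k} (hf : f ≠ 0) :
    t.IsLeadExp f (t.leadExp f) := by
  have hsupp : f.support.Nonempty := by
    rw [Finset.nonempty_iff_ne_empty]
    simpa [MvPolynomial.support_eq_empty] using hf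
  obtain ⟨a, ha, hmax⟩ := t.exists_max f.support hsupp
  have hex : ∃ α, t.IsLeadExp f α := ⟨a, ha, hmax⟩
  rw [TermOrder.leadExp, dif_pos hex]
  exact hex.choose_spec

theorem isLeadExp_unique {f : MvPolynomial (Fin n) k} {α β : Fin n →₀ ℕ}
    (h1 : t.IsLeadExp f α) (h2 : t.IsLeadExp f β) : α = β := by
  by_contra hne
  exact t.lt_asymm' (h1.2 β h2.1 (Ne.symm hne)) (h2.2 α h1.1 hne)

theorem leadExp_eq {f : MvPolynomial (Fin n) k} {α : Fin n →₀ ℕ}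
    (h : t.IsLeadExp f α) : t.leadExp f = α := by
  have hf : f ≠ 0 := by
    intro h0
    rw [h0] at h
    simpa using h.1
  exact t.isLeadExp_unique (t.isLeadExp_leadExp hf) h

end TermOrder
theorem wt_add (ω : Fin n → ℝ) (α β : Fin n →₀ ℕ) : wt ω (α + β) = wt ω α + wt ω β := by
  unfold wt
  rw [← Finset.sum_add_distrib]
  refine Finset.sum_congr rfl fun i _ => ?_
  rw [Finsupp.add_apply]
  push_cast
  ring

theorem wt_le_wt {ω : Fin n → ℝ} (hω : ∀ i, 0 ≤ ω i) {α β : Fin n →₀ ℕ} (h : α ≤ β) :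
    wt ω α ≤ wt ω β :=
  Finset.sum_le_sum fun i _ =>
    mul_le_mul_of_nonneg_left (Nat.cast_le.2 (Finsupp.le_def.mp h i)) (hω i)

section refine

variable (ω : Fin n → ℝ) (t : TermOrder n)

theorem refineLt_key {ω : Fin n → ℝ} (hω : ∀ i, 0 ≤ ω i) {t : TermOrder n}
    {a b : Fin n →₀ ℕ} (h : refineLt ω t a b) : ¬ b ≤ a := by
  intro hba
  rcases h with h | ⟨h1, h2⟩
  · exact absurd (wt_le_wt hω hba) (not_le.mpr h)
  · have hab : b + (a - b) = a := add_tsub_cancel_of_le hba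
    rcases t.le_add' b (a - b) with he | hlt
    · rw [hab] at he
      rw [← he] at h2
      exact t.irrefl b h2
    · rw [hab] at hlt
      exact t.lt_asymm' h2 hlt

theorem refineLt_trans {ω : Fin n → ℝ} {t : TermOrder n} {a b c : Fin n →₀ ℕ}
    (h : refineLt ω t a b) (h' : refineLt ω t b c) : refineLt ω t a c := by
  rcases h with h | ⟨h1, h2⟩ <;> rcases h' with h' | ⟨h1', h2'⟩
  · exact Or.inl (h.trans h')
  · exact Or.inl (h1' ▸ h)
  · exact Or.inl (h1 ▸ h')
  · exact Or.inr ⟨h1.trans h1', t.trans _ _ _ h2 h2'⟩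

theorem refineLt_irrefl {ω : Fin n → ℝ} {t : TermOrder n} (a : Fin n →₀ ℕ) :
    ¬ refineLt ω t a a := by
  rintro (h | ⟨h1, h2⟩)
  · exact lt_irrefl _ h
  · exact t.irrefl a h2

theorem refineLt_wf {ω : Fin n → ℝ} (hω : ∀ i, 0 ≤ ω i) (t : TermOrder n) :
    WellFounded (refineLt ω t) := by
  haveI : IsTrans (Fin n →₀ ℕ) (refineLt ω t) := ⟨fun _ _ _ => refineLt_trans⟩
  haveI : IsIrrefl (Fin n →₀ ℕ) (refineLt ω t) := ⟨refineLt_irrefl⟩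
  haveI : IsStrictOrder (Fin n →₀ ℕ) (refineLt ω t) := { }
  rw [RelEmbedding.wellFounded_iff_isEmpty]
  constructor
  intro F
  obtain ⟨m, m', hlt, hle⟩ :=
    (wellQuasiOrdered_le (α := Fin n →₀ ℕ)) F
  exact refineLt_key hω (F.map_rel_iff.2 hlt) hle

noncomputable def refineOrder {ω : Fin n → ℝ} (hω : ∀ i, 0 ≤ ω i) (t : TermOrder n) :
    TermOrder n where
  lt := refineLt ω t
  irrefl := refineLt_irrefl
  trans _ _ _ := refineLt_trans
  trichotomous a b := by
    rcases lt_trichotomy (wt ω a) (wt ω b) with h | h | h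
    · exact Or.inl (Or.inl h)
    · rcases t.trichotomous a b with h' | h' | h'
      · exact Or.inl (Or.inr ⟨h, h'⟩)
      · exact Or.inr (Or.inl h')
      · exact Or.inr (Or.inr (Or.inr ⟨h.symm, h'⟩))
    · exact Or.inr (Or.inr (Or.inl h))
  wf := refineLt_wf hω t
  add_right a b c := by
    rintro (h | ⟨h1, h2⟩)
    · exact Or.inl (by rw [wt_add, wt_add]; linarith)
    · exact Or.inr ⟨by rw [wt_add, wt_add, h1], t.add_right _ _ _ h2⟩

end refine

section Slice

variable {k : Type*} [CommSemiring k]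

theorem coeff_sum_monomial (s : Finset (Fin n →₀ ℕ)) (c : (Fin n →₀ ℕ) → k) (β : Fin n →₀ ℕ) :
    coeff β (∑ α ∈ s, monomial α (c α)) = if β ∈ s then c β else 0 := by
  classical
  rw [MvPolynomial.coeff_sum]
  simp [MvPolynomial.coeff_monomial, Finset.sum_ite_eq']

noncomputable def wslice (ω : Fin n → ℝ) (W : ℝ) (f : MvPolynomial (Fin n) k) :
    MvPolynomial (Fin n) k :=
  ∑ α ∈ f.support.filter (fun α => wt ω α = W), monomial α (coeff α f)

theorem coeff_wslice (ω : Fin n → ℝ) (W : ℝ) (f : MvPolynomial (Fin n) k) (β : Fin n →₀ ℕ) :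
    coeff β (wslice ω W f) = if wt ω β = W then coeff β f else 0 := by
  classical
  rw [wslice, coeff_sum_monomial]
  by_cases h2 : β ∈ f.support
  · by_cases h1 : wt ω β = W
    · rw [if_pos (Finset.mem_filter.2 ⟨h2, h1⟩), if_pos h1]
    · have hnm : β ∉ f.support.filter (fun α => wt ω α = W) :=
        fun hm => h1 (Finset.mem_filter.1 hm).2
      rw [if_neg hnm, if_neg h1]
  · have hnm : β ∉ f.support.filter (fun α => wt ω α = W) :=
      fun hm => h2 (Finset.mem_filter.1 hm).1
    rw [if_neg hnm]
    simp [MvPolynomial.notMem_support_iff.mp h2]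

theorem coeff_initialForm (ω : Fin n → ℝ) (f : MvPolynomial (Fin n) k) (β : Fin n →₀ ℕ) :
    coeff β (initialForm ω f) =
      if ∀ γ ∈ f.support, wt ω γ ≤ wt ω β then coeff β f else 0 := by
  classical
  rw [initialForm, coeff_sum_monomial]
  by_cases h2 : β ∈ f.support
  · by_cases h1 : ∀ γ ∈ f.support, wt ω γ ≤ wt ω β
    · rw [if_pos (Finset.mem_filter.2 ⟨h2, h1⟩), if_pos h1]
    · have hnm : β ∉ f.support.filter (fun α => ∀ γ ∈ f.support, wt ω γ ≤ wt ω α) :=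
        fun hm => h1 (Finset.mem_filter.1 hm).2
      rw [if_neg hnm, if_neg h1]
  · have hnm : β ∉ f.support.filter (fun α => ∀ γ ∈ f.support, wt ω γ ≤ wt ω α) :=
      fun hm => h2 (Finset.mem_filter.1 hm).1
    rw [if_neg hnm]
    simp [MvPolynomial.notMem_support_iff.mp h2]

theorem initialForm_eq_wslice {ω : Fin n → ℝ} {f : MvPolynomial (Fin n) k} {α0 : Fin n →₀ ℕ}
    (h0 : α0 ∈ f.support) (hmax : ∀ β ∈ f.support, wt ω β ≤ wt ω α0) :
    initialForm ω f = wslice ω (wt ω α0) f := by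
  apply MvPolynomial.ext; intro β
  rw [coeff_initialForm, coeff_wslice]
  by_cases hβ : β ∈ f.support
  · by_cases h1 : ∀ γ ∈ f.support, wt ω γ ≤ wt ω β
    · rw [if_pos h1, if_pos (le_antisymm (hmax β hβ) (h1 α0 h0))]
    · rw [if_neg h1, if_neg]
      intro he
      exact h1 fun γ hγ => he ▸ hmax γ hγ
  · split_ifs <;> simp [MvPolynomial.notMem_support_iff.mp hβ]

theorem wslice_sub {k : Type*} [CommRing k] (ω : Fin n → ℝ) (W : ℝ)
    (p q : MvPolynomial (Fin n) k) : wslice ω W (p - q) = wslice ω W p - wslice ω W q := by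
  apply MvPolynomial.ext; intro β
  rw [MvPolynomial.coeff_sub, coeff_wslice, coeff_wslice, coeff_wslice, MvPolynomial.coeff_sub]
  split_ifs <;> simp

theorem wslice_monomial_mul {ω : Fin n → ℝ} {g : MvPolynomial (Fin n) k} {e : Fin n →₀ ℕ}
    (h1 : coeff e g = 1)
    (hwt : ∀ β ∈ g.support, β ≠ e → wt ω β < wt ω e) (δ : Fin n →₀ ℕ) (c : k) :
    wslice ω (wt ω (δ + e)) (monomial δ c * g) = monomial (δ + e) c := by
  apply MvPolynomial.ext; intro β
  rw [coeff_wslice, MvPolynomial.coeff_monomial]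
  by_cases hβ : δ + e = β
  · subst hβ
    rw [MvPolynomial.coeff_monomial_mul', if_pos (self_le_add_right δ e),
      add_tsub_cancel_left, h1, mul_one]
    simp
  · rw [if_neg hβ, MvPolynomial.coeff_monomial_mul']
    split_ifs with hw hd
    · by_contra hne
      have hγ : (β - δ) ∈ g.support := by
        rw [MvPolynomial.mem_support_iff]
        intro h0
        exact hne (by rw [h0, mul_zero])
      have hβδ : δ + (β - δ) = β := add_tsub_cancel_of_le hd
      have hne' : β - δ ≠ e := fun h => hβ (by rw [← hβδ, h])
      have hlt := hwt _ hγ hne'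
      rw [← hβδ, wt_add, wt_add] at hw
      linarith
    · rfl
    · rfl

end Slice

section SpanMonomials

variable {k : Type*} [CommSemiring k]

theorem mem_span_monomials {G : Finset (MvPolynomial (Fin n) k)}
    {E : MvPolynomial (Fin n) k → (Fin n →₀ ℕ)} {c : MvPolynomial (Fin n) k → k}
    {p : MvPolynomial (Fin n) k}
    (hp : p ∈ Ideal.span ((fun g => (monomial (E g) (c g) : MvPolynomial (Fin n) k)) ''
      (G : Set (MvPolynomial (Fin n) k))))
    {α : Fin n →₀ ℕ} (hα : α ∈ p.support) : ∃ g ∈ G, E g ≤ α := by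
  classical
  rw [← Finset.coe_image, ← Ideal.submodule_span_eq, Submodule.mem_span_finset] at hp
  obtain ⟨q, -, hq⟩ := hp
  rw [MvPolynomial.mem_support_iff] at hα
  have hcoe : coeff α (∑ i ∈ G.image (fun g => (monomial (E g) (c g) : MvPolynomial (Fin n) k)),
      q i • i) ≠ 0 := by rw [hq]; exact hα
  rw [MvPolynomial.coeff_sum] at hcoe
  obtain ⟨i, hi, hci⟩ : ∃ i ∈ G.image (fun g => (monomial (E g) (c g) : MvPolynomial (Fin n) k)),
      coeff α (q i • i) ≠ 0 := by
    by_contra hc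
    push_neg at hc
    exact hcoe (Finset.sum_eq_zero hc)
  obtain ⟨g, hg, rfl⟩ := Finset.mem_image.mp hi
  refine ⟨g, hg, ?_⟩
  by_contra hle
  rw [smul_eq_mul, MvPolynomial.coeff_mul_monomial', if_neg hle] at hci
  exact hci rfl

end SpanMonomials

section Main

variable {k : Type*} [Field k]

theorem lead_strict_of_rep {ω : Fin n → ℝ} {t : TermOrder n} {g : MvPolynomial (Fin n) k}
    (hmono : coeff (t.leadExp g) g = 1) (hrep : initialForm ω g = t.leadTerm g) :
    ∀ β ∈ g.support, β ≠ t.leadExp g → wt ω β < wt ω (t.leadExp g) := by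
  set e := t.leadExp g with he
  have hge : e ∈ g.support := by
    rw [MvPolynomial.mem_support_iff, hmono]; exact one_ne_zero
  have hco : ∀ β, coeff β (initialForm ω g) = coeff β (t.leadTerm g) := fun β => by rw [hrep]
  have hmax : ∀ γ ∈ g.support, wt ω γ ≤ wt ω e := by
    have h0 := hco e
    rw [coeff_initialForm] at h0
    have h0r : coeff e (t.leadTerm g) = 1 := by
      simp only [TermOrder.leadTerm]
      rw [← he, MvPolynomial.coeff_monomial, if_pos rfl, hmono]
    rw [h0r] at h0
    by_contra hc
    rw [if_neg hc] at h0
    exact zero_ne_one h0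
  intro β hβ hne
  have h0 := hco β
  rw [coeff_initialForm] at h0
  have h0r : coeff β (t.leadTerm g) = 0 := by
    simp only [TermOrder.leadTerm]
    rw [← he, MvPolynomial.coeff_monomial, if_neg (show ¬ e = β from fun h => hne h.symm)]
  rw [h0r] at h0
  have hncond : ¬ ∀ γ ∈ g.support, wt ω γ ≤ wt ω β := by
    intro hcond
    rw [if_pos hcond] at h0
    exact (MvPolynomial.mem_support_iff.mp hβ) h0
  push_neg at hncond
  obtain ⟨γ, hγ, hγlt⟩ := hncond
  exact lt_of_lt_of_le hγlt (hmax γ hγ)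

theorem star_lemma {ω : Fin n → ℝ} (t t' t'' : TermOrder n) (h'' : t''.lt = refineLt ω t')
    (I : Ideal (MvPolynomial (Fin n) k)) (G : Finset (MvPolynomial (Fin n) k))
    (hGI : ∀ g ∈ G, g ∈ I)
    (hspan : Ideal.span ((fun g => t.leadTerm g) '' (G : Set (MvPolynomial (Fin n) k)))
      = initialIdealT t I)
    (hmono : ∀ g ∈ G, coeff (t.leadExp g) g = 1)
    (hwt : ∀ g ∈ G, ∀ β ∈ g.support, β ≠ t.leadExp g → wt ω β < wt ω (t.leadExp g)) :
    ∀ f, f ∈ I → f ≠ 0 → ∃ g ∈ G, t.leadExp g ≤ t''.leadExp f := by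
  suffices H : ∀ a : Fin n →₀ ℕ, ∀ f : MvPolynomial (Fin n) k, t.leadExp f = a → f ∈ I →
      f ≠ 0 → ∃ g ∈ G, t.leadExp g ≤ t''.leadExp f from fun f hf h0 => H _ f rfl hf h0
  intro a
  refine t.wf.induction
    (C := fun a => ∀ f : MvPolynomial (Fin n) k, t.leadExp f = a → f ∈ I → f ≠ 0 →
      ∃ g ∈ G, t.leadExp g ≤ t''.leadExp f) a ?_
  clear a
  intro a IH f hfα hfI hf0
  subst hfα
  have hle : t.IsLeadExp f (t.leadExp f) := t.isLeadExp_leadExp hf0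
  set α := t.leadExp f with hα
  have hmem : t.leadTerm f ∈ Ideal.span ((fun g => t.leadTerm g) ''
      (G : Set (MvPolynomial (Fin n) k))) := by
    rw [hspan]
    exact Ideal.subset_span ⟨f, hfI, hf0, rfl⟩
  have hsupp : α ∈ (t.leadTerm f).support := by
    rw [MvPolynomial.mem_support_iff]
    simp only [TermOrder.leadTerm, ← hα, MvPolynomial.coeff_monomial, if_pos rfl]
    exact MvPolynomial.mem_support_iff.mp hle.1
  have hmem2 : t.leadTerm f ∈ Ideal.span ((fun g =>
      (monomial (t.leadExp g) (coeff (t.leadExp g) g) : MvPolynomial (Fin n) k)) ''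
      (G : Set (MvPolynomial (Fin n) k))) := by
    simpa only [TermOrder.leadTerm] using hmem
  obtain ⟨g, hgG, hdvd⟩ : ∃ g ∈ G, t.leadExp g ≤ α := mem_span_monomials hmem2 hsupp
  set e := t.leadExp g with he
  have hg0 : g ≠ 0 := by
    intro h
    have := hmono g hgG
    rw [h] at this
    simp at this
  have hgle : t.IsLeadExp g e := t.isLeadExp_leadExp hg0
  have hf'' : t''.IsLeadExp f (t''.leadExp f) := t''.isLeadExp_leadExp hf0
  set A := t''.leadExp f with hA
  by_cases hAa : A = α
  · exact ⟨g, hgG, by rw [hAa]; exact hdvd⟩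
  have hwA : ∀ β ∈ f.support, wt ω β ≤ wt ω A := by
    intro β hβ
    by_cases hbA : β = A
    · rw [hbA]
    · have h1 := hf''.2 β hβ hbA
      rw [h''] at h1
      rcases h1 with h1 | ⟨h1, _⟩
      · exact le_of_lt h1
      · exact le_of_eq h1
  set δ := α - e with hδ
  have hδe : δ + e = α := tsub_add_cancel_of_le hdvd
  set c := coeff α f with hc
  set f' := f - monomial δ c * g with hf'
  have hcoeffm : ∀ β, coeff β (monomial δ c * g) ≠ 0 → δ ≤ β ∧ (β - δ) ∈ g.support := by
    intro β hb
    rw [MvPolynomial.coeff_monomial_mul'] at hb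
    by_cases hd : δ ≤ β
    · rw [if_pos hd] at hb
      exact ⟨hd, MvPolynomial.mem_support_iff.2 fun h0 => hb (by rw [h0, mul_zero])⟩
    · rw [if_neg hd] at hb
      exact absurd rfl hb
  have hcoeffα : coeff α (monomial δ c * g) = c := by
    have hδα : δ ≤ α := by rw [← hδe]; exact self_le_add_right δ e
    rw [MvPolynomial.coeff_monomial_mul', if_pos hδα,
      show α - δ = e by rw [← hδe, add_tsub_cancel_left], hmono g hgG, mul_one]
  have hcαf' : coeff α f' = 0 := by
    rw [hf', MvPolynomial.coeff_sub, hcoeffα, hc, sub_self]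
  have hlt' : ∀ β ∈ f'.support, t.lt β α := by
    intro β hβ
    have hβα : β ≠ α := fun h => (MvPolynomial.mem_support_iff.mp hβ) (h ▸ hcαf')
    rw [MvPolynomial.mem_support_iff, hf', MvPolynomial.coeff_sub] at hβ
    by_cases hbf : coeff β f = 0
    · rw [hbf, zero_sub, neg_ne_zero] at hβ
      obtain ⟨hd, hγ⟩ := hcoeffm β hβ
      have hβδ : δ + (β - δ) = β := add_tsub_cancel_of_le hd
      have hγe : β - δ ≠ e := fun h => hβα (by rw [← hβδ, h, hδe])
      have h2 := t.add_right _ _ δ (hgle.2 _ hγ hγe)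
      rwa [add_comm (β - δ) δ, hβδ, add_comm e δ, hδe] at h2
    · exact hle.2 β (MvPolynomial.mem_support_iff.2 hbf) hβα
  have hcAf' : coeff A f' = coeff A f := by
    rw [hf', MvPolynomial.coeff_sub]
    have hzero : coeff A (monomial δ c * g) = 0 := by
      by_contra hne
      obtain ⟨hd, hγ⟩ := hcoeffm A hne
      have hβδ : δ + (A - δ) = A := add_tsub_cancel_of_le hd
      by_cases hγe : A - δ = e
      · exact hAa (by rw [← hβδ, hγe, hδe])
      · have hwlt := hwt g hgG _ hγ hγe
        have hwα : wt ω α ≤ wt ω A := hwA α hle.1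
        have hlt2 : wt ω A < wt ω α := by
          rw [← hβδ, wt_add, ← hδe, wt_add]
          rw [← he] at hwlt
          linarith
        linarith
    rw [hzero, sub_zero]
  have hAsupp' : A ∈ f'.support := by
    rw [MvPolynomial.mem_support_iff, hcAf']
    exact MvPolynomial.mem_support_iff.mp hf''.1
  have hf'0 : f' ≠ 0 := by
    intro h
    rw [h] at hAsupp'
    simp at hAsupp'
  have hf'lead : t''.IsLeadExp f' A := by
    refine ⟨hAsupp', ?_⟩
    intro β hβ hβA
    have hβmem := hβ
    rw [MvPolynomial.mem_support_iff, hf', MvPolynomial.coeff_sub] at hβmem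
    by_cases hbf : coeff β f = 0
    · rw [hbf, zero_sub, neg_ne_zero] at hβmem
      obtain ⟨hd, hγ⟩ := hcoeffm β hβmem
      have hβδ : δ + (β - δ) = β := add_tsub_cancel_of_le hd
      by_cases hγe : β - δ = e
      · have hβα : β = α := by rw [← hβδ, hγe, hδe]
        rw [hβα]
        exact hf''.2 α hle.1 (fun h => hAa h.symm)
      · have hwlt := hwt g hgG _ hγ hγe
        rw [← he] at hwlt
        have hwα : wt ω α ≤ wt ω A := hwA α hle.1
        rw [h'']
        left
        have h5 : wt ω β < wt ω α := by
          rw [← hβδ, wt_add, ← hδe, wt_add]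
          linarith
        linarith
    · exact hf''.2 β (MvPolynomial.mem_support_iff.2 hbf) hβA
  have hAf' : t''.leadExp f' = A := t''.leadExp_eq hf'lead
  have hf'I : f' ∈ I := I.sub_mem hfI (I.mul_mem_left _ (hGI g hgG))
  obtain ⟨g', hg', hle'⟩ :=
    IH (t.leadExp f') (hlt' _ (t.isLeadExp_leadExp hf'0).1) f' rfl hf'I hf'0
  exact ⟨g', hg', by rwa [hAf'] at hle'⟩

end Main

section Main2

variable {k : Type*} [Field k]

theorem inw_lemma {ω : Fin n → ℝ} (t t' t'' : TermOrder n) (h'' : t''.lt = refineLt ω t')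
    (I : Ideal (MvPolynomial (Fin n) k)) (G : Finset (MvPolynomial (Fin n) k))
    (hGI : ∀ g ∈ G, g ∈ I)
    (hmono : ∀ g ∈ G, coeff (t.leadExp g) g = 1)
    (hwt : ∀ g ∈ G, ∀ β ∈ g.support, β ≠ t.leadExp g → wt ω β < wt ω (t.leadExp g))
    (hstar : ∀ f, f ∈ I → f ≠ 0 → ∃ g ∈ G, t.leadExp g ≤ t''.leadExp f) :
    ∀ f, f ∈ I → f ≠ 0 → initialForm ω f ∈
      Ideal.span ((fun g => t.leadTerm g) '' (G : Set (MvPolynomial (Fin n) k))) := by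
  suffices H : ∀ a : Fin n →₀ ℕ, ∀ f : MvPolynomial (Fin n) k, t''.leadExp f = a → f ∈ I →
      f ≠ 0 → initialForm ω f ∈
        Ideal.span ((fun g => t.leadTerm g) '' (G : Set (MvPolynomial (Fin n) k)))
    from fun f hf h0 => H _ f rfl hf h0
  intro a
  refine t''.wf.induction
    (C := fun a => ∀ f : MvPolynomial (Fin n) k, t''.leadExp f = a → f ∈ I → f ≠ 0 →
      initialForm ω f ∈
        Ideal.span ((fun g => t.leadTerm g) '' (G : Set (MvPolynomial (Fin n) k)))) a ?_
  clear a
  intro a IH f hfA hfI hf0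
  subst hfA
  have hf'' : t''.IsLeadExp f (t''.leadExp f) := t''.isLeadExp_leadExp hf0
  set A := t''.leadExp f with hA
  have hwA : ∀ β ∈ f.support, wt ω β ≤ wt ω A := by
    intro β hβ
    by_cases hbA : β = A
    · rw [hbA]
    · have h1 := hf''.2 β hβ hbA
      rw [h''] at h1
      rcases h1 with h1 | ⟨h1, _⟩
      · exact le_of_lt h1
      · exact le_of_eq h1
  have hiff : initialForm ω f = wslice ω (wt ω A) f := initialForm_eq_wslice hf''.1 hwA
  obtain ⟨g, hgG, hdvd⟩ := hstar f hfI hf0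
  set e := t.leadExp g with he
  have hg0 : g ≠ 0 := by
    intro h
    have := hmono g hgG
    rw [h] at this
    simp at this
  set δ := A - e with hδ
  have hδe : δ + e = A := tsub_add_cancel_of_le hdvd
  set c := coeff A f with hc
  set f' := f - monomial δ c * g with hf'
  have hslicem : wslice ω (wt ω A) (monomial δ c * g) = monomial A c := by
    have := wslice_monomial_mul (ω := ω) (hmono g hgG)
      (by rw [← he]; exact hwt g hgG) δ c
    rw [hδe] at this
    exact this
  have hsl : wslice ω (wt ω A) f = wslice ω (wt ω A) f' + monomial A c := by
    rw [hf', wslice_sub, hslicem]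
    ring
  have hmono' : monomial A c ∈
      Ideal.span ((fun g => t.leadTerm g) '' (G : Set (MvPolynomial (Fin n) k))) := by
    have heq : monomial A c = monomial δ c * t.leadTerm g := by
      simp only [TermOrder.leadTerm]
      rw [← he, hmono g hgG, MvPolynomial.monomial_mul, mul_one, hδe]
    rw [heq]
    exact Ideal.mul_mem_left _ _ (Ideal.subset_span (Set.mem_image_of_mem _ hgG))
  have hcoeffm : ∀ β, coeff β (monomial δ c * g) ≠ 0 → δ ≤ β ∧ (β - δ) ∈ g.support := by
    intro β hb
    rw [MvPolynomial.coeff_monomial_mul'] at hb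
    by_cases hd : δ ≤ β
    · rw [if_pos hd] at hb
      exact ⟨hd, MvPolynomial.mem_support_iff.2 fun h0 => hb (by rw [h0, mul_zero])⟩
    · rw [if_neg hd] at hb
      exact absurd rfl hb
  have hcoeffA : coeff A (monomial δ c * g) = c := by
    have hδA : δ ≤ A := by rw [← hδe]; exact self_le_add_right δ e
    rw [MvPolynomial.coeff_monomial_mul', if_pos hδA,
      show A - δ = e by rw [← hδe, add_tsub_cancel_left], hmono g hgG, mul_one]
  have hcAf' : coeff A f' = 0 := by
    rw [hf', MvPolynomial.coeff_sub, hcoeffA, hc, sub_self]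
  have hW'max : ∀ γ ∈ f'.support, wt ω γ ≤ wt ω A := by
    intro γ hγ
    rw [MvPolynomial.mem_support_iff, hf', MvPolynomial.coeff_sub] at hγ
    by_cases hbf : coeff γ f = 0
    · rw [hbf, zero_sub, neg_ne_zero] at hγ
      obtain ⟨hd, hγs⟩ := hcoeffm γ hγ
      have hβδ : δ + (γ - δ) = γ := add_tsub_cancel_of_le hd
      by_cases hγe : γ - δ = e
      · rw [← hβδ, hγe, hδe]
      · have hwlt := hwt g hgG _ hγs hγe
        rw [← he] at hwlt
        rw [← hβδ, wt_add, ← hδe, wt_add]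
        linarith
    · exact hwA γ (MvPolynomial.mem_support_iff.2 hbf)
  have hsl' : wslice ω (wt ω A) f' ∈
      Ideal.span ((fun g => t.leadTerm g) '' (G : Set (MvPolynomial (Fin n) k))) := by
    by_cases hz : wslice ω (wt ω A) f' = 0
    · rw [hz]; exact Ideal.zero_mem _
    · obtain ⟨β, hβ⟩ : ∃ β, coeff β (wslice ω (wt ω A) f') ≠ 0 := by
        by_contra hcn
        push_neg at hcn
        exact hz (MvPolynomial.ext _ _ fun β => by rw [hcn β, MvPolynomial.coeff_zero])
      rw [coeff_wslice] at hβ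
      have hβw : wt ω β = wt ω A := by
        by_contra h
        rw [if_neg h] at hβ
        exact hβ rfl
      rw [if_pos hβw] at hβ
      have hβs : β ∈ f'.support := MvPolynomial.mem_support_iff.2 hβ
      have hf'0 : f' ≠ 0 := by
        intro h
        rw [h] at hβs
        simp at hβs
      -- every element of supp f' is t''-below A
      have hbelow : ∀ γ ∈ f'.support, t''.lt γ A := by
        intro γ hγ
        have hγA : γ ≠ A := fun h => (MvPolynomial.mem_support_iff.mp hγ) (h ▸ hcAf')
        have hγ2 := hγ
        rw [MvPolynomial.mem_support_iff, hf', MvPolynomial.coeff_sub] at hγ2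
        by_cases hbf : coeff γ f = 0
        · rw [hbf, zero_sub, neg_ne_zero] at hγ2
          obtain ⟨hd, hγs⟩ := hcoeffm γ hγ2
          have hβδ : δ + (γ - δ) = γ := add_tsub_cancel_of_le hd
          by_cases hγe : γ - δ = e
          · exact absurd (by rw [← hβδ, hγe, hδe]) hγA
          · have hwlt := hwt g hgG _ hγs hγe
            rw [← he] at hwlt
            rw [h'']
            left
            rw [← hβδ, wt_add, ← hδe, wt_add]
            linarith
        · exact hf''.2 γ (MvPolynomial.mem_support_iff.2 hbf) hγA
      have hf'I : f' ∈ I := I.sub_mem hfI (I.mul_mem_left _ (hGI g hgG))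
      have hfslice : initialForm ω f' = wslice ω (wt ω A) f' := by
        have h1 := initialForm_eq_wslice hβs (fun γ hγ => (hW'max γ hγ).trans_eq hβw.symm)
        rw [hβw] at h1
        exact h1
      have hmeasure : t''.lt (t''.leadExp f') A :=
        hbelow _ (t''.isLeadExp_leadExp hf'0).1
      have := IH (t''.leadExp f') hmeasure f' rfl hf'I hf'0
      rwa [hfslice] at this
  rw [hiff, hsl]
  exact Ideal.add_mem _ hsl' hmono'

end Main2

/-- If `ω` lies in the relative interior of the Gröbner cone of `t`
(each element of the reduced Gröbner basis `G` has `in_ω(g) = in_t(g)`), then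
`in_ω(I) = in_t(I)` is a monomial ideal, and `G` is a Gröbner basis of `I` with respect
to the refinement of `ω` by any term ordering. -/
theorem relint_weight_vector {k : Type*} [Field k] (t : TermOrder n)
    (I : Ideal (MvPolynomial (Fin n) k)) (G : Finset (MvPolynomial (Fin n) k))
    (hG : IsReducedGB t I G) (ω : Fin n → ℝ) (hω : ∀ i, 0 ≤ ω i)
    (hrep : ∀ g ∈ G, initialForm ω g = t.leadTerm g) :
    initialIdealW ω I = initialIdealT t I ∧
    (∃ S : Set (Fin n →₀ ℕ),
        initialIdealW ω I = Ideal.span ((fun α => (monomial α (1 : k))) '' S)) ∧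
    ∀ t' t'' : TermOrder n, t''.lt = refineLt ω t' → IsGroebnerBasis t'' I G := by
  obtain ⟨hGB, hmono, -, -⟩ := hG
  have hwt : ∀ g ∈ G, ∀ β ∈ g.support, β ≠ t.leadExp g → wt ω β < wt ω (t.leadExp g) :=
    fun g hg => lead_strict_of_rep (hmono g hg) (hrep g hg)
  have hg0 : ∀ g ∈ G, g ≠ 0 := by
    intro g hg h
    have := hmono g hg
    rw [h] at this
    simp at this
  -- the canonical refinement of ω by t itself
  set t0 : TermOrder n := refineOrder hω t with ht0
  have h0 : t0.lt = refineLt ω t := rfl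
  have hstar0 : ∀ f, f ∈ I → f ≠ 0 → ∃ g ∈ G, t.leadExp g ≤ t0.leadExp f :=
    star_lemma t t t0 h0 I G hGB.1 hGB.2 hmono hwt
  -- part 1 : initialIdealW ω I = initialIdealT t I
  have hpart1 : initialIdealW ω I = initialIdealT t I := by
    apply le_antisymm
    · rw [initialIdealW, Ideal.span_le]
      rintro p ⟨f, hfI, hf0, rfl⟩
      have := inw_lemma t t t0 h0 I G hGB.1 hmono hwt hstar0 f hfI hf0
      rwa [hGB.2] at this
    · rw [← hGB.2, Ideal.span_le]
      rintro p ⟨g, hg, rfl⟩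
      exact Ideal.subset_span ⟨g, hGB.1 g hg, hg0 g hg, (hrep g hg).symm⟩
  refine ⟨hpart1, ⟨(fun g => t.leadExp g) '' (G : Set (MvPolynomial (Fin n) k)), ?_⟩, ?_⟩
  · rw [hpart1, ← hGB.2]
    congr 1
    rw [Set.image_image]
    refine Set.image_congr fun g hg => ?_
    simp only [TermOrder.leadTerm]
    rw [hmono g hg]
  · intro t' t'' h''
    have hstar : ∀ f, f ∈ I → f ≠ 0 → ∃ g ∈ G, t.leadExp g ≤ t''.leadExp f :=
      star_lemma t t' t'' h'' I G hGB.1 hGB.2 hmono hwt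
    have hlead'' : ∀ g ∈ G, t''.leadTerm g = t.leadTerm g := by
      intro g hg
      have hle : t''.IsLeadExp g (t.leadExp g) := by
        refine ⟨(t.isLeadExp_leadExp (hg0 g hg)).1, ?_⟩
        intro β hβ hne
        rw [h'']
        exact Or.inl (hwt g hg β hβ hne)
      have hle2 : t''.leadExp g = t.leadExp g := t''.leadExp_eq hle
      simp only [TermOrder.leadTerm, hle2]
    refine ⟨hGB.1, le_antisymm ?_ ?_⟩
    · rw [Ideal.span_le]
      rintro p ⟨g, hg, rfl⟩
      exact Ideal.subset_span ⟨g, hGB.1 g hg, hg0 g hg, rfl⟩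
    · rw [initialIdealT, Ideal.span_le]
      rintro p ⟨f, hfI, hf0, rfl⟩
      obtain ⟨g, hg, hdvd⟩ := hstar f hfI hf0
      have heq : t''.leadTerm f =
          monomial (t''.leadExp f - t.leadExp g) (coeff (t''.leadExp f) f) * t''.leadTerm g := by
        rw [hlead'' g hg]
        simp only [TermOrder.leadTerm]
        rw [hmono g hg, MvPolynomial.monomial_mul, mul_one, tsub_add_cancel_of_le hdvd]
      rw [heq]
      exact Ideal.mul_mem_left _ _ (Ideal.subset_span (Set.mem_image_of_mem _ hg))
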